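/- Let Ω ⊆ ℝ^N be a domain, r ∈ [1, ∞), and let (u_n) be a bounded sequence in L^r(Ω). If u_n → u almost everywhere on Ω as n → ∞, then for every q ∈ [1, r], lim_{n → ∞} ∫_Ω | |u_n|^q − |u_n − u|^q − |u|^q |^{r/q} = 0. -/

import Mathlib

open MeasureTheory Real Filter Topology Metric Set
open scoped ENNReal RealInnerProductSpace

noncomputable section

abbrev Euc (N : ℕ) := EuclideanSpace ℝ (Fin N)

/-- The Riesz potential `I_α` on `ℝ^N`. -/
def rieszPot (N : ℕ) (α : ℝ) (x : Euc N) : ℝ :=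
  Real.Gamma (((N : ℝ) - α) / 2) /
    (Real.Gamma (α / 2) * Real.pi ^ ((N : ℝ) / 2) * (2 : ℝ) ^ α * ‖x‖ ^ ((N : ℝ) - α))

/-- Convolution with the Riesz potential. -/
def rieszConv (N : ℕ) (α : ℝ) (f : Euc N → ℝ) (x : Euc N) : ℝ :=
  ∫ y, rieszPot N α (x - y) * f y

/-- The nonlocal term `∫ (I_α ∗ |u|^p) |u|^p`. -/
def nonlocTerm (N : ℕ) (α p : ℝ) (u : Euc N → ℝ) : ℝ :=
  ∫ x, rieszConv N α (fun y => |u y| ^ p) x * |u x| ^ p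

/-- `du` is the distributional gradient of `u`. -/
def HasWeakGradient {N : ℕ} (u : Euc N → ℝ) (du : Euc N → Euc N) : Prop :=
  ∀ φ : Euc N → ℝ, ContDiff ℝ (⊤ : ℕ∞) φ → HasCompactSupport φ →
    ∫ x, u x • gradient φ x = - ∫ x, φ x • du x

/-- `u ∈ W^{1,2}(ℝ^N)` with distributional gradient `du`. -/
structure MemW12 {N : ℕ} (u : Euc N → ℝ) (du : Euc N → Euc N) : Prop where
  memLp_u : MemLp u 2 (volume : Measure (Euc N))
  memLp_du : MemLp du 2 (volume : Measure (Euc N))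
  weak : HasWeakGradient u du

/-- `u` is a weak solution of the Choquard equation `-Δu + u = (I_α ∗ |u|^p)|u|^{p-2}u`. -/
def IsWeakSolution (N : ℕ) (α p : ℝ) (u : Euc N → ℝ) (du : Euc N → Euc N) : Prop :=
  ∀ φ : Euc N → ℝ, ContDiff ℝ (⊤ : ℕ∞) φ → HasCompactSupport φ →
    ∫ x, ((inner ℝ (du x) (gradient φ x) : ℝ) + u x * φ x) =
      ∫ x, rieszConv N α (fun y => |u y| ^ p) x * |u x| ^ (p - 2) * u x * φ x

/-- The energy functional `E_{α,p}`. -/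
def chEnergy (N : ℕ) (α p : ℝ) (u : Euc N → ℝ) (du : Euc N → Euc N) : ℝ :=
  (1 / 2) * (∫ x, (‖du x‖ ^ 2 + (u x) ^ 2)) - (1 / (2 * p)) * nonlocTerm N α p u

/-- The Nehari constraint. -/
def Nehari (N : ℕ) (α p : ℝ) (v : Euc N → ℝ) (dv : Euc N → Euc N) : Prop :=
  (∫ x, (‖dv x‖ ^ 2 + (v x) ^ 2)) = nonlocTerm N α p v

/-- Energies of nontrivial `W^{1,2}` functions on the Nehari constraint. -/
def groundEnergies (N : ℕ) (α p : ℝ) : Set ℝ :=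
  { e | ∃ v dv, MemW12 v dv ∧ ¬ (v =ᵐ[(volume : Measure (Euc N))] 0) ∧
        Nehari N α p v dv ∧ e = chEnergy N α p v dv }

/-- `u` is a groundstate of the Choquard equation. -/
def IsGroundstate (N : ℕ) (α p : ℝ) (u : Euc N → ℝ) (du : Euc N → Euc N) : Prop :=
  MemW12 u du ∧ IsWeakSolution N α p u du ∧
    chEnergy N α p u du = sInf (groundEnergies N α p)


lemma bl_rpow_add_le {p : ℝ} (hp : 0 ≤ p) {x y : ℝ} (hx : 0 ≤ x) (hy : 0 ≤ y) :
    (x + y) ^ p ≤ 2 ^ p * (x ^ p + y ^ p) := by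
  have h1 : x + y ≤ 2 * max x y := by
    rcases le_total x y with h | h
    · simp [max_eq_right h]; linarith
    · simp [max_eq_left h]; linarith
  have h2 : (x + y) ^ p ≤ (2 * max x y) ^ p :=
    Real.rpow_le_rpow (by linarith) h1 hp
  have h3 : (2 * max x y) ^ p = 2 ^ p * (max x y) ^ p :=
    Real.mul_rpow (by norm_num) (le_max_of_le_left hx)
  have h4 : (max x y) ^ p ≤ x ^ p + y ^ p := by
    rcases le_total x y with h | h
    · rw [max_eq_right h]
      have := Real.rpow_nonneg hx p
      linarith
    · rw [max_eq_left h]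
      have := Real.rpow_nonneg hy p
      linarith
  calc (x + y) ^ p ≤ 2 ^ p * (max x y) ^ p := h3 ▸ h2
    _ ≤ 2 ^ p * (x ^ p + y ^ p) := by
        have : (0:ℝ) ≤ 2 ^ p := Real.rpow_nonneg (by norm_num) p
        nlinarith


lemma bl_ptwise {q : ℝ} (hq : 1 ≤ q) {ε : ℝ} (hε : 0 < ε) :
    ∃ C : ℝ, 0 ≤ C ∧ ∀ a b : ℝ, |(|a + b| ^ q - |a| ^ q)| ≤ ε * |a| ^ q + C * |b| ^ q := by
  have hq0 : (0:ℝ) < q := by linarith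
  -- choose δ
  have hc1 : ContinuousAt (fun δ : ℝ => (1 + δ) ^ q) 0 := by
    apply ContinuousAt.rpow_const
    · exact (continuous_const.add continuous_id).continuousAt
    · right; linarith
  have hc2 : ContinuousAt (fun δ : ℝ => (1 - δ) ^ q) 0 := by
    apply ContinuousAt.rpow_const
    · exact (continuous_const.sub continuous_id).continuousAt
    · right; linarith
  have hv1 : Tendsto (fun δ : ℝ => (1 + δ) ^ q) (𝓝 0) (𝓝 1) := by
    simpa using hc1.tendsto
  have hv2 : Tendsto (fun δ : ℝ => (1 - δ) ^ q) (𝓝 0) (𝓝 1) := by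
    simpa using hc2.tendsto
  have h1 : ∀ᶠ δ : ℝ in 𝓝 0, (1 + δ) ^ q < 1 + ε := hv1.eventually_lt_const (by linarith)
  have h2 : ∀ᶠ δ : ℝ in 𝓝 0, 1 - ε < (1 - δ) ^ q := hv2.eventually_const_lt (by linarith)
  have h3 : ∀ᶠ δ : ℝ in 𝓝 (0:ℝ), δ < 1 := eventually_lt_nhds (by norm_num)
  have h5 : ∀ᶠ δ : ℝ in 𝓝[>] (0:ℝ), δ ∈ Ioi (0:ℝ) :=
    eventually_mem_nhdsWithin
  obtain ⟨δ, ⟨⟨hδ1, hδ2⟩, hδ3⟩, hδ0⟩ :=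
    ((((h1.and h2).and h3).filter_mono nhdsWithin_le_nhds).and h5).exists
  rw [mem_Ioi] at hδ0
  refine ⟨(1/δ + 1) ^ q + (1/δ) ^ q, by positivity, fun a b => ?_⟩
  have habs : |a| - |b| ≤ |a + b| := by
    have h := abs_add_le (a + b) (-b)
    simp only [add_neg_cancel_right, abs_neg] at h
    linarith
  have haq : (0:ℝ) ≤ |a| ^ q := Real.rpow_nonneg (abs_nonneg a) q
  have hbq : (0:ℝ) ≤ |b| ^ q := Real.rpow_nonneg (abs_nonneg b) q
  by_cases hab : |b| ≤ δ * |a|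
  · have hCb : (0:ℝ) ≤ ((1/δ + 1) ^ q + (1/δ) ^ q) * |b| ^ q := by positivity
    have hup : |a + b| ^ q - |a| ^ q ≤ ε * |a| ^ q := by
      have e1 : |a + b| ≤ (1 + δ) * |a| := by
        have := abs_add_le a b
        nlinarith [abs_nonneg a]
      have e2 : |a + b| ^ q ≤ ((1 + δ) * |a|) ^ q :=
        Real.rpow_le_rpow (abs_nonneg _) e1 hq0.le
      rw [Real.mul_rpow (by linarith) (abs_nonneg a)] at e2
      nlinarith
    have hlo : |a| ^ q - |a + b| ^ q ≤ ε * |a| ^ q := by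
      have e1 : (1 - δ) * |a| ≤ |a + b| := by nlinarith [abs_nonneg a]
      have e2 : ((1 - δ) * |a|) ^ q ≤ |a + b| ^ q :=
        Real.rpow_le_rpow (by nlinarith [abs_nonneg a]) e1 hq0.le
      rw [Real.mul_rpow (by linarith) (abs_nonneg a)] at e2
      nlinarith
    have := abs_le.mpr ⟨by linarith, hup⟩
    calc |(|a + b| ^ q - |a| ^ q)| ≤ ε * |a| ^ q := this
      _ ≤ ε * |a| ^ q + ((1/δ + 1) ^ q + (1/δ) ^ q) * |b| ^ q := by linarith
  · push_neg at hab
    have ha_le : |a| ≤ (1/δ) * |b| := by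
      rw [div_mul_eq_mul_div, le_div_iff₀ hδ0]
      nlinarith
    have e1 : |a| ^ q ≤ (1/δ) ^ q * |b| ^ q := by
      have := Real.rpow_le_rpow (abs_nonneg a) ha_le hq0.le
      rwa [Real.mul_rpow (by positivity) (abs_nonneg b)] at this
    have e2 : |a + b| ^ q ≤ (1/δ + 1) ^ q * |b| ^ q := by
      have h' : |a + b| ≤ (1/δ + 1) * |b| := by
        have := abs_add_le a b
        nlinarith [abs_nonneg b]
      have := Real.rpow_le_rpow (abs_nonneg _) h' hq0.le
      rwa [Real.mul_rpow (by positivity) (abs_nonneg b)] at this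
    have habq : (0:ℝ) ≤ |a + b| ^ q := Real.rpow_nonneg (abs_nonneg _) q
    have h1' : (0:ℝ) ≤ (1/δ) ^ q * |b| ^ q := by positivity
    have h2' : (0:ℝ) ≤ (1/δ + 1) ^ q * |b| ^ q := by positivity
    have : |(|a + b| ^ q - |a| ^ q)| ≤ ((1/δ + 1) ^ q + (1/δ) ^ q) * |b| ^ q := by
      rw [abs_le]
      constructor <;> nlinarith
    nlinarith

lemma bl_master {q p r ε C' : ℝ} (hq : 1 ≤ q) (hp : 1 ≤ p) (hqp : q * p = r)
    (hε : 0 < ε) (hC' : 0 ≤ C')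
    (hpt : ∀ a b : ℝ, |(|a + b| ^ q - |a| ^ q)| ≤ ε * |a| ^ q + C' * |b| ^ q)
    (a b : ℝ) :
    |(|a + b| ^ q - |a| ^ q - |b| ^ q)| ^ p ≤
      2 ^ p * ε ^ p * |a| ^ r + 2 ^ p * (C' + 1) ^ p * |b| ^ r := by
  have hq0 : (0:ℝ) < q := by linarith
  have hp0 : (0:ℝ) < p := by linarith
  have haq : (0:ℝ) ≤ |a| ^ q := Real.rpow_nonneg (abs_nonneg a) q
  have hbq : (0:ℝ) ≤ |b| ^ q := Real.rpow_nonneg (abs_nonneg b) q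
  have h1 : |(|a + b| ^ q - |a| ^ q - |b| ^ q)| ≤ ε * |a| ^ q + (C' + 1) * |b| ^ q := by
    have h := hpt a b
    have h2 := abs_sub (|a + b| ^ q - |a| ^ q) (|b| ^ q)
    have h3 : |(|b| ^ q)| = |b| ^ q := abs_of_nonneg hbq
    calc |(|a + b| ^ q - |a| ^ q - |b| ^ q)|
        ≤ |(|a + b| ^ q - |a| ^ q)| + |(|b| ^ q)| := abs_sub _ _
      _ ≤ ε * |a| ^ q + C' * |b| ^ q + |b| ^ q := by rw [h3]; linarith
      _ = ε * |a| ^ q + (C' + 1) * |b| ^ q := by ring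
  have h2 : |(|a + b| ^ q - |a| ^ q - |b| ^ q)| ^ p ≤
      (ε * |a| ^ q + (C' + 1) * |b| ^ q) ^ p :=
    Real.rpow_le_rpow (abs_nonneg _) h1 hp0.le
  have h3 : (ε * |a| ^ q + (C' + 1) * |b| ^ q) ^ p ≤
      2 ^ p * ((ε * |a| ^ q) ^ p + ((C' + 1) * |b| ^ q) ^ p) :=
    bl_rpow_add_le hp0.le (by positivity) (by positivity)
  have e1 : (ε * |a| ^ q) ^ p = ε ^ p * |a| ^ r := by
    rw [Real.mul_rpow hε.le haq, ← Real.rpow_mul (abs_nonneg a), hqp]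
  have e2 : ((C' + 1) * |b| ^ q) ^ p = (C' + 1) ^ p * |b| ^ r := by
    rw [Real.mul_rpow (by linarith) hbq, ← Real.rpow_mul (abs_nonneg b), hqp]
  calc |(|a + b| ^ q - |a| ^ q - |b| ^ q)| ^ p
      ≤ 2 ^ p * ((ε * |a| ^ q) ^ p + ((C' + 1) * |b| ^ q) ^ p) := le_trans h2 h3
    _ = 2 ^ p * ε ^ p * |a| ^ r + 2 ^ p * (C' + 1) ^ p * |b| ^ r := by
        rw [e1, e2]; ring


theorem brezis_lieb_variant (N : ℕ) (hN : 1 ≤ N) (Ω : Set (Euc N)) (hΩ : IsOpen Ω)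
    (r : ℝ) (hr : 1 ≤ r) (u : ℕ → Euc N → ℝ) (v : Euc N → ℝ)
    (hmem : ∀ n, MemLp (u n) (ENNReal.ofReal r) (volume.restrict Ω))
    (hbdd : ∃ C : ℝ≥0∞, C < ⊤ ∧ ∀ n, eLpNorm (u n) (ENNReal.ofReal r) (volume.restrict Ω) ≤ C)
    (hae : ∀ᵐ x ∂(volume.restrict Ω), Tendsto (fun n => u n x) atTop (𝓝 (v x))) :
    ∀ q : ℝ, 1 ≤ q → q ≤ r →
      Tendsto (fun n =>
          ∫ x in Ω, (abs (|u n x| ^ q - |u n x - v x| ^ q - |v x| ^ q)) ^ (r / q))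
        atTop (𝓝 0) := by
  intro q hq hqr
  set μ := volume.restrict Ω with hμdef
  have hr0 : (0:ℝ) < r := by linarith
  have hq0 : (0:ℝ) < q := by linarith
  set p := r / q with hpdef
  have hp1 : 1 ≤ p := (one_le_div hq0).mpr hqr
  have hp0 : (0:ℝ) < p := by linarith
  have hqp : q * p = r := by
    rw [hpdef, mul_comm, div_mul_cancel₀ r hq0.ne']
  have hpr0 : ENNReal.ofReal r ≠ 0 := by
    simp only [ne_eq, ENNReal.ofReal_eq_zero, not_le]; linarith
  have hprt : ENNReal.ofReal r ≠ ∞ := ENNReal.ofReal_ne_top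
  have hptoReal : (ENNReal.ofReal r).toReal = r := ENNReal.toReal_ofReal hr0.le
  obtain ⟨C, hCtop, hCb⟩ := hbdd
  have hmeasu : ∀ n, AEStronglyMeasurable (u n) μ := fun n => (hmem n).1
  have hmeasv : AEStronglyMeasurable v μ :=
    aestronglyMeasurable_of_tendsto_ae atTop hmeasu hae
  have hvnorm : eLpNorm v (ENNReal.ofReal r) μ ≤ C := by
    refine le_trans (MeasureTheory.Lp.eLpNorm_lim_le_liminf_eLpNorm hmeasu v hae) ?_
    refine le_trans (Filter.liminf_le_liminf (Eventually.of_forall hCb)) ?_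
    simp [Filter.liminf_const]
  have hvmem : MemLp v (ENNReal.ofReal r) μ := ⟨hmeasv, lt_of_le_of_lt hvnorm hCtop⟩
  have hdmem : ∀ n, MemLp (u n - v) (ENNReal.ofReal r) μ := fun n => (hmem n).sub hvmem
  have honer : (1:ℝ≥0∞) ≤ ENNReal.ofReal r := by
    rw [← ENNReal.ofReal_one]; exact ENNReal.ofReal_le_ofReal hr
  have hdnorm : ∀ n, eLpNorm (u n - v) (ENNReal.ofReal r) μ ≤ C + C := fun n =>
    le_trans (eLpNorm_sub_le (hmeasu n) hmeasv honer) (add_le_add (hCb n) hvnorm)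
  have hCCtop : (C + C) ≠ ∞ := ENNReal.add_ne_top.mpr ⟨hCtop.ne, hCtop.ne⟩
  set M : ℝ := ((C + C).toReal) ^ r with hMdef
  have hM0 : 0 ≤ M := Real.rpow_nonneg ENNReal.toReal_nonneg r
  -- uniform bound on ∫ |u n - v|^r
  have hIr : ∀ n, (∫ x, |u n x - v x| ^ r ∂μ) ≤ M := by
    intro n
    have heq := (hdmem n).eLpNorm_eq_integral_rpow_norm hpr0 hprt
    rw [hptoReal] at heq
    have hA0 : 0 ≤ ∫ a, ‖(u n - v) a‖ ^ r ∂μ :=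
      integral_nonneg fun a => Real.rpow_nonneg (norm_nonneg _) r
    have hle : ENNReal.ofReal ((∫ a, ‖(u n - v) a‖ ^ r ∂μ) ^ r⁻¹) ≤ C + C := heq ▸ hdnorm n
    have h1 := (ENNReal.ofReal_le_iff_le_toReal hCCtop).mp hle
    have h2 : ((∫ a, ‖(u n - v) a‖ ^ r ∂μ) ^ r⁻¹) ^ r ≤ ((C + C).toReal) ^ r :=
      Real.rpow_le_rpow (Real.rpow_nonneg hA0 _) h1 hr0.le
    rw [Real.rpow_inv_rpow hA0 hr0.ne'] at h2
    simpa [Real.norm_eq_abs, Pi.sub_apply] using h2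
  have habs_cont : ∀ s : ℝ, 0 ≤ s → Continuous (fun t : ℝ => |t| ^ s) := fun s hs =>
    (Real.continuous_rpow_const hs).comp continuous_abs
  -- the functions
  set F : ℕ → Euc N → ℝ :=
    fun n x => |(|u n x| ^ q - |u n x - v x| ^ q - |v x| ^ q)| ^ p with hFdef
  have hF0 : ∀ n x, 0 ≤ F n x := fun n x => Real.rpow_nonneg (abs_nonneg _) p
  have hFmeas : ∀ n, AEMeasurable (F n) μ := by
    intro n
    have hY : AEMeasurable (fun x => |u n x| ^ q - |u n x - v x| ^ q - |v x| ^ q) μ := by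
      have h1 : AEMeasurable (fun x => |u n x| ^ q) μ :=
        (habs_cont q hq0.le).measurable.comp_aemeasurable (hmeasu n).aemeasurable
      have h2 : AEMeasurable (fun x => |u n x - v x| ^ q) μ :=
        (habs_cont q hq0.le).measurable.comp_aemeasurable
          ((hmeasu n).aemeasurable.sub hmeasv.aemeasurable)
      have h3 : AEMeasurable (fun x => |v x| ^ q) μ :=
        (habs_cont q hq0.le).measurable.comp_aemeasurable hmeasv.aemeasurable
      exact (h1.sub h2).sub h3
    exact (habs_cont p hp0.le).measurable.comp_aemeasurable hY
  have htmeas : ∀ n, AEMeasurable (fun x => |u n x - v x| ^ r) μ := fun n =>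
    (habs_cont r hr0.le).measurable.comp_aemeasurable ((hmeasu n).aemeasurable.sub hmeasv.aemeasurable)
  have htint : ∀ n, Integrable (fun x => |u n x - v x| ^ r) μ := by
    intro n
    have := (hdmem n).integrable_norm_rpow hpr0 hprt
    rw [hptoReal] at this
    simpa [Real.norm_eq_abs, Pi.sub_apply] using this
  have hvint : Integrable (fun x => |v x| ^ r) μ := by
    have := hvmem.integrable_norm_rpow hpr0 hprt
    rw [hptoReal] at this
    simpa [Real.norm_eq_abs] using this
  -- the limit statement
  rw [Metric.tendsto_atTop]
  intro ε' hε'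
  -- choose ε
  have htends : Tendsto (fun ε : ℝ => 2 ^ p * ε ^ p * M) (𝓝 0) (𝓝 0) := by
    have h1 : ContinuousAt (fun ε : ℝ => ε ^ p) 0 :=
      Real.continuousAt_rpow_const 0 p (Or.inr hp0.le)
    have h2 : Tendsto (fun ε : ℝ => ε ^ p) (𝓝 0) (𝓝 0) := by
      have := h1.tendsto
      rwa [Real.zero_rpow hp0.ne'] at this
    have := (h2.const_mul (2 ^ p : ℝ)).mul_const M
    simpa using this
  obtain ⟨ε, hεlt, hε0⟩ :=
    (((htends.mono_left nhdsWithin_le_nhds).eventually_lt_const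
      (half_pos hε')).and (eventually_mem_nhdsWithin (s := Ioi (0:ℝ)))).exists
  rw [mem_Ioi] at hε0
  obtain ⟨C', hC'0, hC'⟩ := bl_ptwise hq hε0
  set K1 : ℝ := 2 ^ p * ε ^ p with hK1def
  set K2 : ℝ := 2 ^ p * (C' + 1) ^ p with hK2def
  have hK10 : 0 ≤ K1 := by positivity
  have hK20 : 0 ≤ K2 := by positivity
  -- master pointwise bound
  have hmaster : ∀ n x, F n x ≤ K1 * |u n x - v x| ^ r + K2 * |v x| ^ r := by
    intro n x
    have h := bl_master hq hp1 hqp hε0 hC'0 hC' (u n x - v x) (v x)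
    rw [sub_add_cancel] at h
    exact h
  set h : ℕ → Euc N → ℝ :=
    fun n x => max (F n x - K1 * |u n x - v x| ^ r) 0 with hhdef
  have hh0 : ∀ n x, 0 ≤ h n x := fun n x => le_max_right _ _
  have hhmeas : ∀ n, AEStronglyMeasurable (h n) μ := fun n =>
    (((hFmeas n).sub ((htmeas n).const_mul K1)).max aemeasurable_const).aestronglyMeasurable
  set bound : Euc N → ℝ := fun x => K2 * |v x| ^ r with hbounddef
  have hbound_int : Integrable bound μ := hvint.const_mul K2
  have h_bound : ∀ n, ∀ᵐ x ∂μ, ‖h n x‖ ≤ bound x := by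
    intro n
    refine Eventually.of_forall fun x => ?_
    rw [Real.norm_eq_abs, abs_of_nonneg (hh0 n x)]
    simp only [hbounddef]
    refine max_le ?_ (by positivity)
    have := hmaster n x
    linarith
  have h_lim : ∀ᵐ x ∂μ, Tendsto (fun n => h n x) atTop (𝓝 0) := by
    filter_upwards [hae] with x hx
    have t0 : Tendsto (fun n => u n x - v x) atTop (𝓝 0) := by
      simpa using hx.sub (tendsto_const_nhds (x := v x))
    have t1 : Tendsto (fun n => |u n x| ^ q) atTop (𝓝 (|v x| ^ q)) :=
      ((habs_cont q hq0.le).tendsto (v x)).comp hx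
    have t2 : Tendsto (fun n => |u n x - v x| ^ q) atTop (𝓝 0) := by
      have := ((habs_cont q hq0.le).tendsto 0).comp t0
      simpa [Real.zero_rpow hq0.ne', Function.comp_def] using this
    have tY : Tendsto (fun n => |u n x| ^ q - |u n x - v x| ^ q - |v x| ^ q) atTop (𝓝 0) := by
      have := (t1.sub t2).sub (tendsto_const_nhds (x := |v x| ^ q))
      simpa using this
    have tF : Tendsto (fun n => F n x) atTop (𝓝 0) := by
      have := ((habs_cont p hp0.le).tendsto 0).comp tY
      simpa [hFdef, Real.zero_rpow hp0.ne', Function.comp_def] using this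
    have tt : Tendsto (fun n => |u n x - v x| ^ r) atTop (𝓝 0) := by
      have := ((habs_cont r hr0.le).tendsto 0).comp t0
      simpa [Real.zero_rpow hr0.ne', Function.comp_def] using this
    have := (tF.sub (tt.const_mul K1)).max (tendsto_const_nhds (x := (0:ℝ)))
    simpa using this
  have hDCT : Tendsto (fun n => ∫ x, h n x ∂μ) atTop (𝓝 0) := by
    have := tendsto_integral_of_dominated_convergence bound hhmeas hbound_int h_bound h_lim
    simpa using this
  have hhint : ∀ n, Integrable (h n) μ := fun n =>
    Integrable.mono' hbound_int (hhmeas n) (h_bound n)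
  have hFint : ∀ n, Integrable (F n) μ := by
    intro n
    refine Integrable.mono' ((hhint n).add ((htint n).const_mul K1))
      (hFmeas n).aestronglyMeasurable (Eventually.of_forall fun x => ?_)
    rw [Real.norm_eq_abs, abs_of_nonneg (hF0 n x)]
    have h1 : F n x - K1 * |u n x - v x| ^ r ≤ h n x := le_max_left _ _
    have h2 : (0:ℝ) ≤ K1 * |u n x - v x| ^ r := by positivity
    simp only [Pi.add_apply]
    linarith
  have hkey : ∀ n, (∫ x, F n x ∂μ) ≤ (∫ x, h n x ∂μ) + K1 * M := by
    intro n
    have h1 : (∫ x, F n x ∂μ) ≤ ∫ x, (h n x + K1 * |u n x - v x| ^ r) ∂μ := by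
      refine integral_mono (hFint n) ((hhint n).add ((htint n).const_mul K1)) fun x => ?_
      have h1 : F n x - K1 * |u n x - v x| ^ r ≤ h n x := le_max_left _ _
      linarith
    rw [integral_add (hhint n) ((htint n).const_mul K1), integral_const_mul] at h1
    have h2 : K1 * ∫ x, |u n x - v x| ^ r ∂μ ≤ K1 * M :=
      mul_le_mul_of_nonneg_left (hIr n) hK10
    linarith
  obtain ⟨Nn, hNn⟩ := (hDCT.eventually_lt_const (half_pos hε')).exists_forall_of_atTop
  refine ⟨Nn, fun n hn => ?_⟩
  have hint0 : 0 ≤ ∫ x, F n x ∂μ := integral_nonneg fun x => hF0 n x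
  have hhi0 : 0 ≤ ∫ x, h n x ∂μ := integral_nonneg fun x => hh0 n x
  rw [Real.dist_eq, sub_zero, abs_of_nonneg hint0]
  have := hkey n
  have := hNn n hn
  linarith
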